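/- arXiv:2604.25156 — 7 statements merged into one kernel-verified Lean document; each statement's English description precedes it below -/
import Mathlib

section
/- Let (A_t)_{t≥0} be the non-stationary single-edge process with parameters (θ_t, δ_t)_{t≥1}. Then for all integers 0 ≤ r ≤ s, Cov(A_r, A_s) = Var(A_r) · ∏_{t=r+1}^{s} (1 − θ_t − δ_t), where the empty product (case r = s) equals 1. -/
open MeasureTheory ProbabilityTheory Finset
open scoped Classical

/-- **Covariance of the non-stationary AR(1) edge process.** With
`A_{t+1} = A_t·1{E_{t+1}=0} + 1{E_{t+1}=1}`, `(A_0, E_1, E_2, …)` mutually independent,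
`P(E_t = 1) = θ_t`, `P(E_t = −1) = δ_t` and `c ≤ P(A_0 = 1) ≤ 1 − c`, for all
`0 ≤ r ≤ s`: `Cov(A_r, A_s) = Var(A_r) · ∏_{t=r+1}^{s} (1 − θ_t − δ_t)` (the empty
product, for `r = s`, equals 1). -/
theorem stmt1
    {Ω : Type*} [MeasurableSpace Ω] (P : Measure Ω) [IsProbabilityMeasure P]
    (c : ℝ) (hc0 : 0 < c) (hc : c < 1 / 2)
    (θ δ : ℕ → ℝ)
    (hθ : ∀ t, 1 ≤ t → θ t ∈ Set.Icc c (1 - c))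
    (hδ : ∀ t, 1 ≤ t → δ t ∈ Set.Icc c (1 - c))
    (E : ℕ → Ω → ℝ) (A : ℕ → Ω → ℝ)
    (hEmeas : ∀ t, Measurable (E t)) (hA0meas : Measurable (A 0))
    (hEval : ∀ t, 1 ≤ t → ∀ ω, E t ω ∈ ({-1, 0, 1} : Set ℝ))
    (hA0val : ∀ ω, A 0 ω ∈ ({0, 1} : Set ℝ))
    (hE1 : ∀ t, 1 ≤ t → P {ω | E t ω = 1} = ENNReal.ofReal (θ t))
    (hEneg : ∀ t, 1 ≤ t → P {ω | E t ω = -1} = ENNReal.ofReal (δ t))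
    (hA0low : c ≤ (P {ω | A 0 ω = 1}).toReal)
    (hA0high : (P {ω | A 0 ω = 1}).toReal ≤ 1 - c)
    (hIndep : iIndepFun
      (fun n : ℕ => if n = 0 then A 0 else E n) P)
    (hrec : ∀ t ω, A (t + 1) ω =
      A t ω * (if E (t + 1) ω = 0 then 1 else 0) +
        (if E (t + 1) ω = 1 then 1 else 0)) :
    ∀ r s : ℕ, r ≤ s →
      (∫ ω, A r ω * A s ω ∂P) - (∫ ω, A r ω ∂P) * (∫ ω, A s ω ∂P) =
        variance (A r) P * ∏ t ∈ Finset.Ioc r s, (1 - θ t - δ t) := by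
  -- the independent family
  set X : ℕ → Ω → ℝ := fun n => if n = 0 then A 0 else E n with hXdef
  have hXmeas : ∀ n, Measurable (X n) := by
    intro n
    by_cases h : n = 0 <;> simp only [hXdef, h, if_true, if_false] <;>
      [exact hA0meas; exact hEmeas n]
  -- measurability of the indicator post-composition
  have hite : ∀ a : ℝ, Measurable (fun x : ℝ => if x = a then (1 : ℝ) else 0) := by
    intro a
    exact Measurable.ite measurableSet_eq measurable_const measurable_const
  -- measurability of A t
  have hAmeas : ∀ t, Measurable (A t) := by
    intro t
    induction t with
    | zero => exact hA0meas
    | succ t ih =>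
      have : A (t + 1) = fun ω => A t ω * (if E (t + 1) ω = 0 then 1 else 0) +
          (if E (t + 1) ω = 1 then 1 else 0) := funext (hrec t)
      rw [this]
      exact (ih.mul ((hite 0).comp (hEmeas (t + 1)))).add ((hite 1).comp (hEmeas (t + 1)))
  -- values of A t
  have hAval : ∀ t ω, A t ω ∈ ({0, 1} : Set ℝ) := by
    intro t
    induction t with
    | zero => exact hA0val
    | succ t ih =>
      intro ω
      have h := ih ω
      simp only [Set.mem_insert_iff, Set.mem_singleton_iff] at h ⊢
      have he := hEval (t + 1) (Nat.le_add_left 1 t) ω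
      simp only [Set.mem_insert_iff, Set.mem_singleton_iff] at he
      rcases h with h | h <;> rw [hrec, h] <;>
        rcases he with he | he | he <;> simp [he] <;> norm_num
  have hAnorm : ∀ t ω, ‖A t ω‖ ≤ 1 := by
    intro t ω
    have h := hAval t ω
    simp only [Set.mem_insert_iff, Set.mem_singleton_iff] at h
    rcases h with h | h <;> simp [h]
  -- integrability helper
  have hbint : ∀ f : Ω → ℝ, Measurable f → (∀ ω, ‖f ω‖ ≤ 1) → Integrable f P := by
    intro f hf hb
    exact (integrable_const (1 : ℝ)).mono' hf.aestronglyMeasurable (ae_of_all _ hb)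
  have hAint : ∀ t, Integrable (A t) P := fun t => hbint _ (hAmeas t) (hAnorm t)
  have hindnorm : ∀ t ω (a : ℝ), ‖(if E t ω = a then (1 : ℝ) else 0)‖ ≤ 1 := by
    intro t ω a; split_ifs <;> simp
  -- representation of A t as function of (X i)_{i ≤ s}
  have hrep : ∀ s t, t ≤ s → ∃ g : ({x // x ∈ Iic s} → ℝ) → ℝ,
      Measurable g ∧ ∀ ω, A t ω = g (fun i : {x // x ∈ Iic s} => X i.1 ω) := by
    intro s t
    induction t with
    | zero =>
      intro _
      refine ⟨fun v => v ⟨0, by simp⟩, measurable_pi_apply _, fun ω => ?_⟩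
      simp [hXdef]
    | succ t ih =>
      intro hts
      obtain ⟨g, hg, hge⟩ := ih (le_trans (Nat.le_succ t) hts)
      have hmem : t + 1 ∈ Iic s := Finset.mem_Iic.mpr hts
      refine ⟨fun v => g v * (if v ⟨t + 1, hmem⟩ = 0 then 1 else 0) +
        (if v ⟨t + 1, hmem⟩ = 1 then 1 else 0), ?_, fun ω => ?_⟩
      · exact (hg.mul ((hite 0).comp (measurable_pi_apply _))).add
          ((hite 1).comp (measurable_pi_apply _))
      · have hX1 : X (t + 1) ω = E (t + 1) ω := by simp [hXdef]
        simp only [hrec t ω, hge ω, hX1]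
  -- key independence facts
  have hdisj : ∀ s : ℕ, Disjoint (Iic s) ({s + 1} : Finset ℕ) := by
    intro s
    simp [Finset.disjoint_singleton_right]
  have hIndepGen : ∀ s : ℕ, ∀ f : Ω → ℝ,
      (∃ g : ({x // x ∈ Iic s} → ℝ) → ℝ, Measurable g ∧ ∀ ω, f ω = g (fun i : {x // x ∈ Iic s} => X i.1 ω)) →
      IndepFun f (E (s + 1)) P := by
    intro s f ⟨g, hg, hge⟩
    have h := (hIndep.indepFun_finset (Iic s) {s + 1} (hdisj s) hXmeas).comp hg
      (measurable_pi_apply (⟨s + 1, Finset.mem_singleton_self _⟩ : {x // x ∈ ({s + 1} : Finset ℕ)}))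
    have e1 : (g ∘ fun ω (i : {x // x ∈ Iic s}) => X i.1 ω) = f := by
      funext ω; exact (hge ω).symm
    have e2 : ((fun v : {x // x ∈ ({s + 1} : Finset ℕ)} → ℝ =>
        v ⟨s + 1, Finset.mem_singleton_self _⟩) ∘
          fun ω (i : {x // x ∈ ({s + 1} : Finset ℕ)}) => X i.1 ω)
        = E (s + 1) := by
      funext ω; simp [Function.comp, hXdef]
    rwa [e1, e2] at h
  have hIndepS : ∀ s t, t ≤ s → IndepFun (A t) (E (s + 1)) P := by
    intro s t hts
    exact hIndepGen s (A t) (hrep s t hts)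
  have hIndepRS : ∀ r s, r ≤ s → IndepFun (fun ω => A r ω * A s ω) (E (s + 1)) P := by
    intro r s hrs
    obtain ⟨gr, hgr, hgre⟩ := hrep s r hrs
    obtain ⟨gs, hgs, hgse⟩ := hrep s s le_rfl
    exact hIndepGen s _ ⟨fun v => gr v * gs v, hgr.mul hgs,
      fun ω => by rw [hgre ω, hgse ω]⟩
  -- integral of indicators
  have hindint : ∀ t (a : ℝ), ∫ ω, (if E t ω = a then (1 : ℝ) else 0) ∂P
      = (P {ω | E t ω = a}).toReal := by
    intro t a
    have hs : MeasurableSet {ω | E t ω = a} := hEmeas t measurableSet_eq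
    have : (fun ω => if E t ω = a then (1 : ℝ) else 0)
        = Set.indicator {ω | E t ω = a} 1 := by
      funext ω
      simp [Set.indicator_apply, Set.mem_setOf_eq]
    rw [this, integral_indicator_one hs, measureReal_def]
  -- probability that E t = 0
  have hp0 : ∀ t, 1 ≤ t → (P {ω | E t ω = 0}).toReal = 1 - θ t - δ t := by
    intro t ht
    set s1 := {ω | E t ω = 1}
    set sm := {ω | E t ω = -1}
    set s0 := {ω | E t ω = 0}
    have hms1 : MeasurableSet s1 := hEmeas t measurableSet_eq
    have hmsm : MeasurableSet sm := hEmeas t measurableSet_eq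
    have hms0 : MeasurableSet s0 := hEmeas t measurableSet_eq
    have hd1 : Disjoint s1 sm := by
      rw [Set.disjoint_left]
      intro ω h1 h2
      simp only [s1, sm, Set.mem_setOf_eq] at h1 h2
      rw [h1] at h2; norm_num at h2
    have hd2 : Disjoint (s1 ∪ sm) s0 := by
      rw [Set.disjoint_left]
      intro ω h1 h2
      simp only [s1, sm, s0, Set.mem_union, Set.mem_setOf_eq] at h1 h2
      rcases h1 with h1 | h1 <;> rw [h2] at h1 <;> norm_num at h1
    have huniv : s1 ∪ sm ∪ s0 = Set.univ := by
      ext ω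
      simp only [s1, sm, s0, Set.mem_union, Set.mem_setOf_eq, Set.mem_univ, iff_true]
      rcases hEval t ht ω with h | h | h <;> tauto
    have hsum : P s1 + P sm + P s0 = 1 := by
      rw [← measure_union hd1 hmsm] at *
      rw [← measure_union hd2 hms0, huniv, measure_univ]
    have h1v : (P s1).toReal = θ t := by
      rw [hE1 t ht, ENNReal.toReal_ofReal (le_trans hc0.le (hθ t ht).1)]
    have hmv : (P sm).toReal = δ t := by
      rw [hEneg t ht, ENNReal.toReal_ofReal (le_trans hc0.le (hδ t ht).1)]
    have hfin1 : P s1 ≠ ⊤ := measure_ne_top _ _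
    have hfinm : P sm ≠ ⊤ := measure_ne_top _ _
    have hfin0 : P s0 ≠ ⊤ := measure_ne_top _ _
    have := congrArg ENNReal.toReal hsum
    rw [ENNReal.toReal_add (by finiteness) hfin0, ENNReal.toReal_add hfin1 hfinm,
      ENNReal.toReal_one, h1v, hmv] at this
    linarith
  have hp1 : ∀ t, 1 ≤ t → (P {ω | E t ω = 1}).toReal = θ t := by
    intro t ht
    rw [hE1 t ht, ENNReal.toReal_ofReal (le_trans hc0.le (hθ t ht).1)]
  -- product integral via independence, with indicator of E (s+1)
  have hmulint : ∀ (s : ℕ) (f : Ω → ℝ) (a : ℝ), IndepFun f (E (s + 1)) P →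
      Measurable f → (∀ ω, ‖f ω‖ ≤ 1) →
      ∫ ω, f ω * (if E (s + 1) ω = a then (1 : ℝ) else 0) ∂P
        = (∫ ω, f ω ∂P) * (P {ω | E (s + 1) ω = a}).toReal := by
    intro s f a hind hf hb
    have hind' : IndepFun f (fun ω => if E (s + 1) ω = a then (1 : ℝ) else 0) P := by
      have := hind.comp measurable_id (hite a)
      exact this
    have := hind'.integral_fun_mul_eq_mul_integral (hbint f hf hb).aestronglyMeasurable
      (hbint _ ((hite a).comp (hEmeas (s + 1))) (fun ω => hindnorm (s + 1) ω a)).aestronglyMeasurable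
    rw [← hindint (s + 1) a]
    exact this
  -- recursion for the mean
  have hmean : ∀ s : ℕ, ∫ ω, A (s + 1) ω ∂P
      = (∫ ω, A s ω ∂P) * (1 - θ (s + 1) - δ (s + 1)) + θ (s + 1) := by
    intro s
    have he : (fun ω => A (s + 1) ω) = fun ω => A s ω * (if E (s + 1) ω = 0 then 1 else 0) +
        (if E (s + 1) ω = 1 then 1 else 0) := funext (hrec s)
    have hb1 : ∀ ω, ‖A s ω * (if E (s + 1) ω = 0 then (1 : ℝ) else 0)‖ ≤ 1 := by
      intro ω
      rw [norm_mul]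
      exact mul_le_one₀ (hAnorm s ω) (norm_nonneg _) (hindnorm (s + 1) ω 0)
    rw [he, integral_add
      (hbint (fun ω => A s ω * (if E (s + 1) ω = 0 then (1 : ℝ) else 0)) ((hAmeas s).mul ((hite 0).comp (hEmeas (s + 1)))) hb1)
      (hbint (fun ω => if E (s + 1) ω = 1 then (1 : ℝ) else 0) ((hite 1).comp (hEmeas (s + 1))) (fun ω => hindnorm (s + 1) ω 1)),
      hmulint s (A s) 0 (hIndepS s s le_rfl) (hAmeas s) (hAnorm s),
      hindint (s + 1) 1, hp0 (s + 1) (Nat.le_add_left 1 s), hp1 (s + 1) (Nat.le_add_left 1 s)]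
  -- recursion for the mixed moment
  have hmixed : ∀ r s : ℕ, r ≤ s → ∫ ω, A r ω * A (s + 1) ω ∂P
      = (∫ ω, A r ω * A s ω ∂P) * (1 - θ (s + 1) - δ (s + 1))
        + (∫ ω, A r ω ∂P) * θ (s + 1) := by
    intro r s hrs
    have he : (fun ω => A r ω * A (s + 1) ω)
        = fun ω => (A r ω * A s ω) * (if E (s + 1) ω = 0 then 1 else 0) +
          A r ω * (if E (s + 1) ω = 1 then 1 else 0) := by
      funext ω
      rw [hrec s ω]; ring
    have hrsnorm : ∀ ω, ‖A r ω * A s ω‖ ≤ 1 := fun ω => by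
      rw [norm_mul]; exact mul_le_one₀ (hAnorm r ω) (norm_nonneg _) (hAnorm s ω)
    have hb1 : ∀ ω, ‖(A r ω * A s ω) * (if E (s + 1) ω = 0 then (1 : ℝ) else 0)‖ ≤ 1 := by
      intro ω
      rw [norm_mul]
      exact mul_le_one₀ (hrsnorm ω) (norm_nonneg _) (hindnorm (s + 1) ω 0)
    have hb2 : ∀ ω, ‖A r ω * (if E (s + 1) ω = 1 then (1 : ℝ) else 0)‖ ≤ 1 := by
      intro ω
      rw [norm_mul]
      exact mul_le_one₀ (hAnorm r ω) (norm_nonneg _) (hindnorm (s + 1) ω 1)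
    rw [he, integral_add
      (hbint (fun ω => (A r ω * A s ω) * (if E (s + 1) ω = 0 then (1 : ℝ) else 0)) (((hAmeas r).mul (hAmeas s)).mul ((hite 0).comp (hEmeas (s + 1)))) hb1)
      (hbint (fun ω => A r ω * (if E (s + 1) ω = 1 then (1 : ℝ) else 0)) ((hAmeas r).mul ((hite 1).comp (hEmeas (s + 1)))) hb2),
      hmulint s _ 0 (hIndepRS r s hrs) ((hAmeas r).mul (hAmeas s)) hrsnorm,
      hmulint s (A r) 1 (hIndepS s r hrs) (hAmeas r) (hAnorm r),
      hp0 (s + 1) (Nat.le_add_left 1 s), hp1 (s + 1) (Nat.le_add_left 1 s)]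
  -- main induction
  intro r s hrs
  induction s, hrs using Nat.le_induction with
  | base =>
    have hL2 : MemLp (A r) 2 P :=
      MemLp.of_bound (hAmeas r).aestronglyMeasurable 1 (ae_of_all _ (hAnorm r))
    rw [Finset.Ioc_self, Finset.prod_empty, mul_one, variance_eq_sub hL2]
    have : (∫ ω, A r ω * A r ω ∂P) = ∫ ω, (A r ^ 2) ω ∂P := by
      congr 1; funext ω; simp [pow_two]
    rw [this]
    ring_nf
  | succ s hrs ih =>
    rw [Finset.prod_Ioc_succ_top hrs, ← mul_assoc, ← ih, hmixed r s hrs, hmean s]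
    ring
end

section
/- Let (A_t)_{t≥0} be the non-stationary single-edge process with parameters (θ_t, δ_t)_{t≥1} ⊂ [c, 1−c]. Then for all integers r, s ≥ 0, 0 ≤ Cov(A_r, A_s) ≤ (1/4)·(1 − 2c)^{|r−s|}. -/
open MeasureTheory ProbabilityTheory
open scoped Classical

/-- The "zero-start" auxiliary process built from the innovations `E` after time `r`. -/
noncomputable def covAuxB {Ω : Type*} (E : ℕ → Ω → ℝ) (r : ℕ) : ℕ → Ω → ℝ
  | 0 => fun _ => 0
  | (k + 1) => fun ω => covAuxB E r k ω * (if E (r + k + 1) ω = 0 then 1 else 0) +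
      (if E (r + k + 1) ω = 1 then 1 else 0)

/-- The product of the "stay" indicators between times `r` and `r + k`. -/
noncomputable def covAuxQ {Ω : Type*} (E : ℕ → Ω → ℝ) (r k : ℕ) (ω : Ω) : ℝ :=
  ∏ i ∈ Finset.range k, (if E (r + i + 1) ω = 0 then 1 else 0)

private lemma indep_mono' {Ω : Type*} {mΩ : MeasurableSpace Ω} {P : Measure Ω}
    {m₁ m₂ m₁' m₂' : MeasurableSpace Ω} (h : Indep m₁ m₂ P)
    (h1 : m₁' ≤ m₁) (h2 : m₂' ≤ m₂) : Indep m₁' m₂' P := by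
  rw [Indep_iff] at h ⊢
  exact fun t1 t2 ht1 ht2 => h t1 t2 (h1 _ ht1) (h2 _ ht2)

private lemma indepFun_of_measurable' {Ω : Type*} {mΩ : MeasurableSpace Ω} {P : Measure Ω}
    {m₁ m₂ : MeasurableSpace Ω} (h : Indep m₁ m₂ P) {f g : Ω → ℝ}
    (hf : Measurable[m₁] f) (hg : Measurable[m₂] g) : IndepFun f g P :=
  indep_mono' h (measurable_iff_comap_le.mp hf) (measurable_iff_comap_le.mp hg)

/-- **Covariance decay of the non-stationary AR(1) edge process.** With
`A_{t+1} = A_t·1{E_{t+1}=0} + 1{E_{t+1}=1}`, `(A_0, E_1, E_2, …)` mutually independent,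
`P(E_t = 1) = θ_t`, `P(E_t = −1) = δ_t`, `θ_t, δ_t ∈ [c, 1−c]` and
`c ≤ P(A_0 = 1) ≤ 1 − c`: for all `r, s ≥ 0`,
`0 ≤ Cov(A_r, A_s) ≤ (1/4)·(1 − 2c)^{|r−s|}`. -/
theorem stmt2
    {Ω : Type*} [MeasurableSpace Ω] (P : Measure Ω) [IsProbabilityMeasure P]
    (c : ℝ) (hc0 : 0 < c) (hc : c < 1 / 2)
    (θ δ : ℕ → ℝ)
    (hθ : ∀ t, 1 ≤ t → θ t ∈ Set.Icc c (1 - c))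
    (hδ : ∀ t, 1 ≤ t → δ t ∈ Set.Icc c (1 - c))
    (E : ℕ → Ω → ℝ) (A : ℕ → Ω → ℝ)
    (hEmeas : ∀ t, Measurable (E t)) (hA0meas : Measurable (A 0))
    (hEval : ∀ t, 1 ≤ t → ∀ ω, E t ω ∈ ({-1, 0, 1} : Set ℝ))
    (hA0val : ∀ ω, A 0 ω ∈ ({0, 1} : Set ℝ))
    (hE1 : ∀ t, 1 ≤ t → P {ω | E t ω = 1} = ENNReal.ofReal (θ t))
    (hEneg : ∀ t, 1 ≤ t → P {ω | E t ω = -1} = ENNReal.ofReal (δ t))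
    (hA0low : c ≤ (P {ω | A 0 ω = 1}).toReal)
    (hA0high : (P {ω | A 0 ω = 1}).toReal ≤ 1 - c)
    (hIndep : iIndepFun
      (fun n : ℕ => if n = 0 then A 0 else E n) P)
    (hrec : ∀ t ω, A (t + 1) ω =
      A t ω * (if E (t + 1) ω = 0 then 1 else 0) +
        (if E (t + 1) ω = 1 then 1 else 0)) :
    ∀ r s : ℕ,
      0 ≤ (∫ ω, A r ω * A s ω ∂P) - (∫ ω, A r ω ∂P) * (∫ ω, A s ω ∂P) ∧
      (∫ ω, A r ω * A s ω ∂P) - (∫ ω, A r ω ∂P) * (∫ ω, A s ω ∂P) ≤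
        1 / 4 * (1 - 2 * c) ^ ((r : ℤ) - (s : ℤ)).natAbs := by
  -- notation
  set F : ℕ → Ω → ℝ := fun n => if n = 0 then A 0 else E n with hF
  have hFmeas : ∀ i, Measurable (F i) := by
    intro i
    by_cases h : i = 0 <;> simp [hF, h, hA0meas, hEmeas]
  set m : ℕ → MeasurableSpace Ω :=
    fun i => MeasurableSpace.comap (F i) inferInstance with hm
  have h_le : ∀ i, m i ≤ ‹MeasurableSpace Ω› := fun i => (hFmeas i).comap_le
  set MS : ℕ → MeasurableSpace Ω := fun r => ⨆ i ∈ {j : ℕ | j ≤ r}, m i with hMS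
  set MT : ℕ → ℕ → MeasurableSpace Ω := fun r s => ⨆ i ∈ Set.Ioc r s, m i with hMT
  have hMS_le : ∀ r, MS r ≤ ‹MeasurableSpace Ω› := fun r => iSup₂_le fun i _ => h_le i
  have hMT_le : ∀ r s, MT r s ≤ ‹MeasurableSpace Ω› := fun r s => iSup₂_le fun i _ => h_le i
  -- indicator functions
  have hiteE : ∀ t : ℕ, 1 ≤ t → ∀ z : ℝ,
      Measurable[m t] (fun ω => if E t ω = z then (1:ℝ) else 0) := by
    intro t ht z
    have hEt : (fun ω => if E t ω = z then (1:ℝ) else 0)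
        = (fun x : ℝ => if x = z then (1:ℝ) else 0) ∘ F t := by
      funext ω
      simp [hF, Nat.one_le_iff_ne_zero.mp ht]
    rw [hEt]
    exact Measurable.comp
      (Measurable.ite (measurableSet_singleton z) measurable_const measurable_const)
      (Measurable.of_comap_le le_rfl)
  -- values of A
  have hAval : ∀ t ω, A t ω = 0 ∨ A t ω = 1 := by
    intro t
    induction t with
    | zero => intro ω; simpa using hA0val ω
    | succ t ih =>
      intro ω
      have := hEval (t + 1) (by omega) ω
      simp only [Set.mem_insert_iff, Set.mem_singleton_iff] at this
      rcases this with h | h | h <;> rcases ih ω with h2 | h2 <;>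
        rw [hrec t ω, h2, h] <;> norm_num
  -- measurability of A r w.r.t. MS r
  have hA_MS : ∀ r, Measurable[MS r] (A r) := by
    intro r
    induction r with
    | zero =>
      have hA0F : A 0 = F 0 := by funext ω; simp [hF]
      rw [hA0F]
      exact (Measurable.of_comap_le le_rfl).mono
        (le_biSup m (show (0:ℕ) ∈ {j : ℕ | j ≤ 0} by simp)) le_rfl
    | succ r ih =>
      have hle1 : MS r ≤ MS (r + 1) := by
        refine biSup_mono ?_
        intro i hi; simp only [Set.mem_setOf_eq] at *; omega
      have hle2 : m (r + 1) ≤ MS (r + 1) :=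
        le_biSup m (show r + 1 ∈ {j : ℕ | j ≤ r + 1} by simp)
      have hrw : A (r + 1) = fun ω => A r ω * (if E (r + 1) ω = 0 then 1 else 0) +
          (if E (r + 1) ω = 1 then 1 else 0) := funext (hrec r)
      rw [hrw]
      exact ((ih.mono hle1 le_rfl).mul
        (((hiteE (r+1) (by omega) 0).mono hle2 le_rfl))).add
        ((hiteE (r+1) (by omega) 1).mono hle2 le_rfl)
  have hAmeas : ∀ r, Measurable (A r) := fun r => (hA_MS r).mono (hMS_le r) le_rfl
  -- integrability / mean bounds for {0,1}-valued functions
  have hint01 : ∀ f : Ω → ℝ, Measurable f → (∀ ω, f ω = 0 ∨ f ω = 1) → Integrable f P := by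
    intro f hmf hv
    refine (integrable_const (1:ℝ)).mono' hmf.aestronglyMeasurable (ae_of_all _ fun ω => ?_)
    rcases hv ω with h | h <;> simp [h]
  have hmean01 : ∀ f : Ω → ℝ, Measurable f → (∀ ω, f ω = 0 ∨ f ω = 1) →
      0 ≤ ∫ ω, f ω ∂P ∧ ∫ ω, f ω ∂P ≤ 1 := by
    intro f hmf hv
    constructor
    · exact integral_nonneg fun ω => by rcases hv ω with h | h <;> simp [h]
    · calc ∫ ω, f ω ∂P ≤ ∫ _, (1:ℝ) ∂P := by
            refine integral_mono (hint01 f hmf hv) (integrable_const 1) fun ω => ?_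
            rcases hv ω with h | h <;> simp [h]
        _ = 1 := by simp
  -- iIndep of the comap σ-algebras
  have hiI : iIndep m P := hIndep.iIndep
  -- expectation of the stay indicator
  have hEX : ∀ t : ℕ, 1 ≤ t →
      0 ≤ (∫ ω, (if E t ω = 0 then (1:ℝ) else 0) ∂P) ∧
      (∫ ω, (if E t ω = 0 then (1:ℝ) else 0) ∂P) ≤ 1 - 2 * c := by
    intro t ht
    have hs0 : MeasurableSet {ω | E t ω = 0} := hEmeas t (measurableSet_singleton 0)
    have hs1 : MeasurableSet {ω | E t ω = 1} := hEmeas t (measurableSet_singleton 1)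
    have hsm : MeasurableSet {ω | E t ω = -1} := hEmeas t (measurableSet_singleton (-1))
    have hint : (∫ ω, (if E t ω = 0 then (1:ℝ) else 0) ∂P) = (P {ω | E t ω = 0}).toReal := by
      rw [show (fun ω => if E t ω = 0 then (1:ℝ) else 0)
          = Set.indicator {ω | E t ω = 0} (fun _ => 1) from by
        funext ω; simp [Set.indicator_apply]]
      exact integral_indicator_one hs0
    have hd1 : Disjoint {ω | E t ω = 1} {ω | E t ω = -1} := by
      rw [Set.disjoint_left]; intro ω h1 h2
      simp only [Set.mem_setOf_eq] at h1 h2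
      rw [h1] at h2; norm_num at h2
    have hd0 : Disjoint {ω | E t ω = 0} ({ω | E t ω = 1} ∪ {ω | E t ω = -1}) := by
      rw [Set.disjoint_left]; intro ω h1 h2
      simp only [Set.mem_setOf_eq, Set.mem_union] at h1 h2
      rcases h2 with h2 | h2 <;> rw [h1] at h2 <;> norm_num at h2
    have huniv : {ω | E t ω = 0} ∪ ({ω | E t ω = 1} ∪ {ω | E t ω = -1}) = Set.univ := by
      ext ω
      have := hEval t ht ω
      simp only [Set.mem_insert_iff, Set.mem_singleton_iff] at this
      simp only [Set.mem_union, Set.mem_setOf_eq, Set.mem_univ, iff_true]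
      tauto
    have hsum : P {ω | E t ω = 0} + (ENNReal.ofReal (θ t) + ENNReal.ofReal (δ t)) = 1 := by
      rw [← hE1 t ht, ← hEneg t ht, ← measure_union hd1 hsm, ← measure_union hd0 (hs1.union hsm),
        huniv, measure_univ]
    have hθt := hθ t ht
    have hδt := hδ t ht
    have hθ0 : 0 ≤ θ t := le_trans hc0.le hθt.1
    have hδ0 : 0 ≤ δ t := le_trans hc0.le hδt.1
    have hfin : P {ω | E t ω = 0} ≠ ⊤ := measure_ne_top P _
    have htr : (P {ω | E t ω = 0}).toReal + (θ t + δ t) = 1 := by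
      have := congrArg ENNReal.toReal hsum
      rwa [ENNReal.toReal_add hfin (by finiteness), ENNReal.toReal_add (by finiteness)
        (by finiteness), ENNReal.toReal_ofReal hθ0, ENNReal.toReal_ofReal hδ0,
        ENNReal.toReal_one] at this
    constructor
    · rw [hint]; exact ENNReal.toReal_nonneg
    · rw [hint]; linarith [hθt.1, hδt.1]
  -- the key covariance computation for s = r + k
  have key : ∀ r k : ℕ,
      0 ≤ (∫ ω, A r ω * A (r + k) ω ∂P) - (∫ ω, A r ω ∂P) * (∫ ω, A (r + k) ω ∂P) ∧
      (∫ ω, A r ω * A (r + k) ω ∂P) - (∫ ω, A r ω ∂P) * (∫ ω, A (r + k) ω ∂P) ≤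
        1 / 4 * (1 - 2 * c) ^ k := by
    intro r k
    -- decomposition A (r+k) = A r * Q + B
    have hdec : ∀ k ω, A (r + k) ω = A r ω * covAuxQ E r k ω + covAuxB E r k ω := by
      intro k
      induction k with
      | zero => intro ω; simp [covAuxQ, covAuxB]
      | succ k ih =>
        intro ω
        rw [show r + (k + 1) = (r + k) + 1 from rfl, hrec (r + k) ω, ih ω]
        simp only [covAuxQ, covAuxB, Finset.prod_range_succ]
        ring
    -- values of B and Q
    have hBval : ∀ k ω, covAuxB E r k ω = 0 ∨ covAuxB E r k ω = 1 := by
      intro k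
      induction k with
      | zero => intro ω; simp [covAuxB]
      | succ k ih =>
        intro ω
        have := hEval (r + k + 1) (by omega) ω
        simp only [Set.mem_insert_iff, Set.mem_singleton_iff] at this
        rcases this with h | h | h <;> rcases ih ω with h2 | h2 <;>
          simp [covAuxB, h, h2] <;> norm_num
    have hQval : ∀ k ω, covAuxQ E r k ω = 0 ∨ covAuxQ E r k ω = 1 := by
      intro k
      induction k with
      | zero => intro ω; simp [covAuxQ]
      | succ k ih =>
        intro ω
        rw [covAuxQ, Finset.prod_range_succ]
        rcases ih ω with h | h <;> rw [show (∏ i ∈ Finset.range k,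
          (if E (r + i + 1) ω = 0 then (1:ℝ) else 0)) = covAuxQ E r k ω from rfl, h] <;>
          by_cases h3 : E (r + k + 1) ω = 0 <;> simp [h3]
    -- measurability w.r.t. MT
    have hmT : ∀ k, m (r + k + 1) ≤ MT r (r + (k + 1)) :=
      fun k => le_biSup m (show r + k + 1 ∈ Set.Ioc r (r + (k+1)) by
        simp [Set.mem_Ioc])
    have hMTmono : ∀ k, MT r (r + k) ≤ MT r (r + (k + 1)) := by
      intro k
      refine biSup_mono ?_
      intro i hi; simp only [Set.mem_Ioc] at *; omega
    have hB_MT : ∀ k, Measurable[MT r (r + k)] (covAuxB E r k) := by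
      intro k
      induction k with
      | zero => exact measurable_const
      | succ k ih =>
        exact ((ih.mono (hMTmono k) le_rfl).mul
            ((hiteE (r + k + 1) (by omega) 0).mono (hmT k) le_rfl)).add
          ((hiteE (r + k + 1) (by omega) 1).mono (hmT k) le_rfl)
    have hQ_MT : ∀ k, Measurable[MT r (r + k)] (covAuxQ E r k) := by
      intro k
      induction k with
      | zero => exact measurable_const
      | succ k ih =>
        have : covAuxQ E r (k + 1) = fun ω =>
            covAuxQ E r k ω * (if E (r + k + 1) ω = 0 then 1 else 0) := by
          funext ω; rw [covAuxQ, Finset.prod_range_succ]; rfl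
        rw [this]
        exact (ih.mono (hMTmono k) le_rfl).mul
          ((hiteE (r + k + 1) (by omega) 0).mono (hmT k) le_rfl)
    have hBmeas : ∀ k, Measurable (covAuxB E r k) :=
      fun k => (hB_MT k).mono (hMT_le r (r + k)) le_rfl
    have hQmeas : ∀ k, Measurable (covAuxQ E r k) :=
      fun k => (hQ_MT k).mono (hMT_le r (r + k)) le_rfl
    -- independence
    have hIndepST : Indep (MS r) (MT r (r + k)) P := by
      refine indep_iSup_of_disjoint h_le hiI ?_
      rw [Set.disjoint_left]
      intro i hi hi'
      simp only [Set.mem_setOf_eq] at hi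
      simp only [Set.mem_Ioc] at hi'
      omega
    have hIndepAQ : IndepFun (A r) (covAuxQ E r k) P :=
      indepFun_of_measurable' hIndepST (hA_MS r) (hQ_MT k)
    have hIndepAB : IndepFun (A r) (covAuxB E r k) P :=
      indepFun_of_measurable' hIndepST (hA_MS r) (hB_MT k)
    -- integrability
    have hintA : Integrable (A r) P := hint01 _ (hAmeas r) (hAval r)
    have hintQ : Integrable (covAuxQ E r k) P := hint01 _ (hQmeas k) (hQval k)
    have hintB : Integrable (covAuxB E r k) P := hint01 _ (hBmeas k) (hBval k)
    have hintAQ : Integrable (fun ω => A r ω * covAuxQ E r k ω) P := by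
      refine hint01 _ ((hAmeas r).mul (hQmeas k)) fun ω => ?_
      rcases hAval r ω with h | h <;> rcases hQval k ω with h2 | h2 <;> simp [h, h2]
    have hintAB : Integrable (fun ω => A r ω * covAuxB E r k ω) P := by
      refine hint01 _ ((hAmeas r).mul (hBmeas k)) fun ω => ?_
      rcases hAval r ω with h | h <;> rcases hBval k ω with h2 | h2 <;> simp [h, h2]
    -- expectations
    set a := ∫ ω, A r ω ∂P with ha
    set q := ∫ ω, covAuxQ E r k ω ∂P with hq
    set b := ∫ ω, covAuxB E r k ω ∂P with hb
    have hAQ : (∫ ω, A r ω * covAuxQ E r k ω ∂P) = a * q :=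
      hIndepAQ.integral_fun_mul_eq_mul_integral hintA.aestronglyMeasurable hintQ.aestronglyMeasurable
    have hAB : (∫ ω, A r ω * covAuxB E r k ω ∂P) = a * b :=
      hIndepAB.integral_fun_mul_eq_mul_integral hintA.aestronglyMeasurable hintB.aestronglyMeasurable
    have hEs : (∫ ω, A (r + k) ω ∂P) = a * q + b := by
      rw [show (fun ω => A (r + k) ω) = fun ω => A r ω * covAuxQ E r k ω + covAuxB E r k ω
        from funext (hdec k)]
      rw [integral_add hintAQ hintB, hAQ]
    have hcross : (∫ ω, A r ω * A (r + k) ω ∂P) = a * q + a * b := by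
      have hpt : ∀ ω, A r ω * A (r + k) ω
          = A r ω * covAuxQ E r k ω + A r ω * covAuxB E r k ω := by
        intro ω
        rw [hdec k ω]
        rcases hAval r ω with h | h <;> rw [h] <;> ring
      rw [show (fun ω => A r ω * A (r + k) ω) = fun ω =>
          A r ω * covAuxQ E r k ω + A r ω * covAuxB E r k ω from funext hpt]
      rw [integral_add hintAQ hintAB, hAQ, hAB]
    -- bound on q
    have hqbound : ∀ k, 0 ≤ (∫ ω, covAuxQ E r k ω ∂P) ∧
        (∫ ω, covAuxQ E r k ω ∂P) ≤ (1 - 2 * c) ^ k := by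
      intro k
      induction k with
      | zero => simp [covAuxQ]
      | succ k ih =>
        have hQsucc : covAuxQ E r (k + 1) = fun ω =>
            covAuxQ E r k ω * (if E (r + k + 1) ω = 0 then 1 else 0) := by
          funext ω; rw [covAuxQ, Finset.prod_range_succ]; rfl
        have hIndep2 : Indep (MT r (r + k)) (MT (r + k) (r + k + 1)) P := by
          refine indep_iSup_of_disjoint h_le hiI ?_
          rw [Set.disjoint_left]
          intro i hi hi'
          simp only [Set.mem_Ioc] at hi hi'
          omega
        have hXle : m (r + k + 1) ≤ MT (r + k) (r + k + 1) :=
          le_biSup m (show r + k + 1 ∈ Set.Ioc (r + k) (r + k + 1) by simp)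
        have hIndepQX : IndepFun (covAuxQ E r k)
            (fun ω => if E (r + k + 1) ω = 0 then (1:ℝ) else 0) P :=
          indepFun_of_measurable' hIndep2 (hQ_MT k)
            ((hiteE (r + k + 1) (by omega) 0).mono hXle le_rfl)
        have hintX : Integrable (fun ω => if E (r + k + 1) ω = 0 then (1:ℝ) else 0) P := by
          refine hint01 _ ((hiteE (r + k + 1) (by omega) 0).mono (h_le _) le_rfl) fun ω => ?_
          by_cases h : E (r + k + 1) ω = 0 <;> simp [h]
        have hmul : (∫ ω, covAuxQ E r (k + 1) ω ∂P)
            = (∫ ω, covAuxQ E r k ω ∂P) *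
              (∫ ω, (if E (r + k + 1) ω = 0 then (1:ℝ) else 0) ∂P) := by
          rw [hQsucc]
          exact hIndepQX.integral_fun_mul_eq_mul_integral (hint01 _ (hQmeas k) (hQval k)).aestronglyMeasurable hintX.aestronglyMeasurable
        have hX := hEX (r + k + 1) (by omega)
        have h2c : (0:ℝ) ≤ 1 - 2 * c := by linarith
        constructor
        · rw [hmul]; exact mul_nonneg ih.1 hX.1
        · rw [hmul, pow_succ]
          exact mul_le_mul ih.2 hX.2 hX.1 (pow_nonneg h2c k)
    have hqb := hqbound k
    rw [← hq] at hqb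
    have hab := hmean01 (A r) (hAmeas r) (hAval r)
    rw [← ha] at hab
    have hcov : (∫ ω, A r ω * A (r + k) ω ∂P) - (∫ ω, A r ω ∂P) * (∫ ω, A (r + k) ω ∂P)
        = q * (a * (1 - a)) := by
      rw [hcross, hEs, ← ha]; ring
    rw [hcov]
    have ha14 : a * (1 - a) ≤ 1 / 4 := by nlinarith [sq_nonneg (2 * a - 1), hab.1, hab.2]
    have ha0 : 0 ≤ a * (1 - a) := mul_nonneg hab.1 (by linarith [hab.2])
    constructor
    · exact mul_nonneg hqb.1 ha0
    · calc q * (a * (1 - a)) ≤ (1 - 2 * c) ^ k * (1 / 4) :=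
          mul_le_mul hqb.2 ha14 ha0 (pow_nonneg (by linarith) k)
        _ = 1 / 4 * (1 - 2 * c) ^ k := by ring
  -- conclude
  intro r s
  rcases le_total r s with h | h
  · obtain ⟨k, rfl⟩ := Nat.exists_eq_add_of_le h
    have hk : ((r : ℤ) - ((r + k : ℕ) : ℤ)).natAbs = k := by push_cast; omega
    rw [hk]
    exact key r k
  · obtain ⟨k, rfl⟩ := Nat.exists_eq_add_of_le h
    have hk : (((s + k : ℕ) : ℤ) - (s : ℤ)).natAbs = k := by push_cast; omega
    rw [hk]
    have hcomm : (∫ ω, A (s + k) ω * A s ω ∂P) = ∫ ω, A s ω * A (s + k) ω ∂P := by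
      congr 1; funext ω; ring
    rw [hcomm, mul_comm (∫ ω, A (s + k) ω ∂P)]
    exact key s k
end

section
/- Let (A_t)_{t≥0} be the non-stationary single-edge process with parameters (θ_t, δ_t)_{t≥1} ⊂ [c, 1−c]. Then for every integer t ≥ 0 and every integer k ≥ 1, every event A belonging to the σ-algebra generated by the random variables A_0, A_1, …, A_t and every event B belonging to the σ-algebra generated by the random variables (A_s)_{s ≥ t+k} satisfy |P(A ∩ B) − P(A)·P(B)| ≤ (1 − 2c)^k. In particular, the α-mixing coefficients of the process satisfy α(k) ≤ (1 − 2c)^k for every k ≥ 1, so the process (A_t)_{t≥0} is strongly mixing. -/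
open MeasureTheory ProbabilityTheory
open scoped Classical


noncomputable def procAux {Ω : Type*} (E : ℕ → Ω → ℝ) (t : ℕ) (a : Ω → ℝ) : ℕ → Ω → ℝ
  | 0 => a
  | n+1 => fun ω => procAux E t a n ω * (if E (t+n+1) ω = 0 then 1 else 0)
      + (if E (t+n+1) ω = 1 then 1 else 0)

lemma procAux_congr {Ω : Type*} (E : ℕ → Ω → ℝ) (t : ℕ) (a b : Ω → ℝ) (ω : Ω) :
    ∀ n, (∃ j, 1 ≤ j ∧ j ≤ n ∧ E (t+j) ω ≠ 0) → procAux E t a n ω = procAux E t b n ω := by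
  intro n
  induction n with
  | zero => rintro ⟨j, hj1, hj0, _⟩; omega
  | succ n ih =>
    rintro ⟨j, hj1, hjn, hne⟩
    by_cases h : E (t+n+1) ω = 0
    · have hj : j ≤ n := by
        rcases Nat.lt_or_ge j (n+1) with h' | h'
        · omega
        · exfalso
          have hj' : j = n+1 := by omega
          subst hj'
          exact hne (by rw [← Nat.add_assoc]; exact h)
      simp only [procAux, ih ⟨j, hj1, hj, hne⟩]
    · simp only [procAux, if_neg h, mul_zero, zero_add]

/-- **Strong mixing of the non-stationary AR(1) edge process.** With
`A_{t+1} = A_t·1{E_{t+1}=0} + 1{E_{t+1}=1}`, `(A_0, E_1, E_2, …)` mutually independent,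
`P(E_t = 1) = θ_t`, `P(E_t = −1) = δ_t`, `θ_t, δ_t ∈ [c, 1−c]` and
`c ≤ P(A_0 = 1) ≤ 1 − c`: for every `t ≥ 0`, `k ≥ 1`, every event `S` in the σ-algebra
generated by `A_0, …, A_t` and every event `T` in the σ-algebra generated by
`(A_s)_{s ≥ t+k}`, `|P(S ∩ T) − P(S)·P(T)| ≤ (1 − 2c)^k`; hence the α-mixing
coefficients satisfy `α(k) ≤ (1 − 2c)^k → 0`, i.e. the process is strongly mixing. -/
theorem stmt3
    {Ω : Type*} [MeasurableSpace Ω] (P : Measure Ω) [IsProbabilityMeasure P]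
    (c : ℝ) (hc0 : 0 < c) (hc : c < 1 / 2)
    (θ δ : ℕ → ℝ)
    (hθ : ∀ t, 1 ≤ t → θ t ∈ Set.Icc c (1 - c))
    (hδ : ∀ t, 1 ≤ t → δ t ∈ Set.Icc c (1 - c))
    (E : ℕ → Ω → ℝ) (A : ℕ → Ω → ℝ)
    (hEmeas : ∀ t, Measurable (E t)) (hA0meas : Measurable (A 0))
    (hEval : ∀ t, 1 ≤ t → ∀ ω, E t ω ∈ ({-1, 0, 1} : Set ℝ))
    (hA0val : ∀ ω, A 0 ω ∈ ({0, 1} : Set ℝ))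
    (hE1 : ∀ t, 1 ≤ t → P {ω | E t ω = 1} = ENNReal.ofReal (θ t))
    (hEneg : ∀ t, 1 ≤ t → P {ω | E t ω = -1} = ENNReal.ofReal (δ t))
    (hA0low : c ≤ (P {ω | A 0 ω = 1}).toReal)
    (hA0high : (P {ω | A 0 ω = 1}).toReal ≤ 1 - c)
    (hIndep : iIndepFun
      (fun n : ℕ => if n = 0 then A 0 else E n) P)
    (hrec : ∀ t ω, A (t + 1) ω =
      A t ω * (if E (t + 1) ω = 0 then 1 else 0) +
        (if E (t + 1) ω = 1 then 1 else 0)) :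
    ∀ t k : ℕ, 1 ≤ k → ∀ S T : Set Ω,
      MeasurableSet[⨆ i ∈ Set.Iic t, MeasurableSpace.comap (A i) inferInstance] S →
      MeasurableSet[⨆ i ∈ Set.Ici (t + k), MeasurableSpace.comap (A i) inferInstance] T →
      |(P (S ∩ T)).toReal - (P S).toReal * (P T).toReal| ≤ (1 - 2 * c) ^ k := by
  intro t k hk S T hS hT
  set m0 : MeasurableSpace Ω := (inferInstance : MeasurableSpace Ω) with hm0
  set X : ℕ → Ω → ℝ := fun n => if n = 0 then A 0 else E n with hX
  have hXmeas : ∀ n, Measurable (X n) := by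
    intro n
    by_cases h : n = 0
    · subst h; simpa [hX] using hA0meas
    · simpa [hX, h] using hEmeas n
  have hXE : ∀ n, 1 ≤ n → X n = E n := by
    intro n hn
    have h : n ≠ 0 := by omega
    simp [hX, h]
  -- past and future sigma algebras on the driving variables
  have hMpast_le : (⨆ i ∈ Set.Iic t, MeasurableSpace.comap (X i) inferInstance)
      ≤ (inferInstance : MeasurableSpace Ω) :=
    iSup₂_le fun i _ => (hXmeas i).comap_le
  have hMfut_le : (⨆ i ∈ Set.Ici (t+1), MeasurableSpace.comap (X i) inferInstance)
      ≤ (inferInstance : MeasurableSpace Ω) :=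
    iSup₂_le fun i _ => (hXmeas i).comap_le
  have hIndepPF : Indep (⨆ i ∈ Set.Iic t, MeasurableSpace.comap (X i) inferInstance)
      (⨆ i ∈ Set.Ici (t+1), MeasurableSpace.comap (X i) inferInstance) P :=
    indep_iSup_of_disjoint (fun i => (hXmeas i).comap_le) hIndep.iIndep
      (Set.Iic_disjoint_Ici.mpr (by omega))
  set Mpast : MeasurableSpace Ω := ⨆ i ∈ Set.Iic t, MeasurableSpace.comap (X i) inferInstance with hMp
  set Mfut : MeasurableSpace Ω := ⨆ i ∈ Set.Ici (t+1), MeasurableSpace.comap (X i) inferInstance with hMf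
  -- indicator measurability helper
  have hind : ∀ (m' : MeasurableSpace Ω) (f : Ω → ℝ), Measurable[m'] f → ∀ r : ℝ,
      Measurable[m'] (fun ω => if f ω = r then (1:ℝ) else 0) := by
    intro m' f hf r
    exact Measurable.ite (hf (measurableSet_singleton r)) measurable_const measurable_const
  -- A i is Mpast-measurable for i ≤ t
  have hApast : ∀ i, i ≤ t → Measurable[Mpast] (A i) := by
    intro i
    induction i with
    | zero =>
      intro _
      have h0 : MeasurableSpace.comap (X 0) inferInstance ≤ Mpast := by
        rw [hMp]
        exact le_iSup₂ (f := fun i _ => MeasurableSpace.comap (X i) inferInstance) 0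
          (Set.mem_Iic.mpr (Nat.zero_le t))
      have : Measurable[Mpast] (X 0) := measurable_iff_comap_le.mpr h0
      simpa [hX] using this
    | succ i ih =>
      intro hit
      have hAi : Measurable[Mpast] (A i) := ih (by omega)
      have hXi : Measurable[Mpast] (X (i+1)) := by
        refine measurable_iff_comap_le.mpr ?_
        rw [hMp]
        exact le_iSup₂ (f := fun j _ => MeasurableSpace.comap (X j) inferInstance) (i+1)
          (Set.mem_Iic.mpr hit)
      have hEi : Measurable[Mpast] (E (i+1)) := by rwa [hXE (i+1) (by omega)] at hXi
      have : Measurable[Mpast] (fun ω => A i ω * (if E (i+1) ω = 0 then 1 else 0)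
          + (if E (i+1) ω = 1 then 1 else 0)) :=
        (hAi.mul (hind _ _ hEi 0)).add (hind _ _ hEi 1)
      have hfun : A (i+1) = fun ω => A i ω * (if E (i+1) ω = 0 then 1 else 0)
          + (if E (i+1) ω = 1 then 1 else 0) := funext fun ω => hrec i ω
      rwa [hfun]
  have hS' : MeasurableSet[Mpast] S := by
    have hle : (⨆ i ∈ Set.Iic t, MeasurableSpace.comap (A i) inferInstance) ≤ Mpast :=
      iSup₂_le fun i hi => measurable_iff_comap_le.mp (hApast i hi)
    exact hle _ hS
  -- relation of A to procAux
  have hAproc : ∀ n ω, A (t + n) ω = procAux E t (A t) n ω := by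
    intro n
    induction n with
    | zero => intro ω; rfl
    | succ n ih =>
      intro ω
      have : t + (n+1) = (t+n) + 1 := by omega
      rw [this, hrec (t+n) ω]
      simp only [procAux, ih ω]
  -- the restarted process
  set A'' : ℕ → Ω → ℝ := fun i => procAux E t (fun _ => (0:ℝ)) (i - t) with hA''
  -- refresh event
  set R : Set Ω := {ω | ∃ s ∈ Finset.Icc (t+1) (t+k), E s ω ≠ 0} with hRdef
  have hagree : ∀ i, t + k ≤ i → ∀ ω ∈ R, A i ω = A'' i ω := by
    intro i hi ω hω
    obtain ⟨s, hs, hsne⟩ := hω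
    rw [Finset.mem_Icc] at hs
    have hti : t + (i - t) = i := by omega
    have h1 := hAproc (i - t) ω
    rw [hti] at h1
    rw [h1, hA'']
    refine procAux_congr E t (A t) (fun _ => 0) ω (i - t) ⟨s - t, by omega, by omega, ?_⟩
    have : t + (s - t) = s := by omega
    rwa [this]
  -- Mfut-measurability of the restarted process
  have hprocmeas : ∀ n, Measurable[Mfut] (procAux E t (fun _ => (0:ℝ)) n) := by
    intro n
    induction n with
    | zero => exact measurable_const
    | succ n ih =>
      have hXn : Measurable[Mfut] (X (t+n+1)) := by
        refine measurable_iff_comap_le.mpr ?_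
        rw [hMf]
        exact le_iSup₂ (f := fun j _ => MeasurableSpace.comap (X j) inferInstance) (t+n+1)
          (Set.mem_Ici.mpr (by omega))
      have hEn : Measurable[Mfut] (E (t+n+1)) := by rwa [hXE (t+n+1) (by omega)] at hXn
      exact (ih.mul (hind _ _ hEn 0)).add (hind _ _ hEn 1)
  have hA''meas : ∀ i, Measurable[Mfut] (A'' i) := fun i => hprocmeas (i - t)
  have hEfutmeas : ∀ s, t + 1 ≤ s → Measurable[Mfut] (E s) := by
    intro s hs
    have hXs : Measurable[Mfut] (X s) := by
      refine measurable_iff_comap_le.mpr ?_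
      rw [hMf]
      exact le_iSup₂ (f := fun j _ => MeasurableSpace.comap (X j) inferInstance) s
        (Set.mem_Ici.mpr hs)
    rwa [hXE s (by omega)] at hXs
  have hR_fut : MeasurableSet[Mfut] R := by
    have : R = ⋃ s ∈ Finset.Icc (t+1) (t+k), {ω | E s ω = 0}ᶜ := by
      rw [hRdef]; ext ω; simp
    rw [this]
    refine Finset.measurableSet_biUnion _ fun s hs => ?_
    rw [Finset.mem_Icc] at hs
    exact ((hEfutmeas s hs.1) (measurableSet_singleton 0)).compl
  -- trace sigma-algebra: sets agreeing on R with an Mfut-measurable set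
  set mT : MeasurableSpace Ω :=
    { MeasurableSet' := fun u => ∃ u', MeasurableSet[Mfut] u' ∧ u ∩ R = u' ∩ R
      measurableSet_empty := ⟨∅, MeasurableSet.empty, by simp⟩
      measurableSet_compl := by
        rintro u ⟨u', hu', he⟩
        refine ⟨u'ᶜ, hu'.compl, ?_⟩
        ext ω
        have h := Set.ext_iff.mp he ω
        simp only [Set.mem_inter_iff, Set.mem_compl_iff] at *
        tauto
      measurableSet_iUnion := by
        intro f hf
        choose g hg he using hf
        refine ⟨⋃ n, g n, MeasurableSet.iUnion hg, ?_⟩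
        rw [Set.iUnion_inter, Set.iUnion_inter]
        exact Set.iUnion_congr he } with hmT
  have hTtrace : ∃ T', MeasurableSet[Mfut] T' ∧ T ∩ R = T' ∩ R := by
    have hle : (⨆ i ∈ Set.Ici (t+k), MeasurableSpace.comap (A i) inferInstance) ≤ mT := by
      refine iSup₂_le fun i hi => ?_
      rintro u ⟨B, hB, rfl⟩
      refine ⟨A'' i ⁻¹' B, (hA''meas i) hB, ?_⟩
      ext ω
      simp only [Set.mem_inter_iff, Set.mem_preimage]
      constructor
      · rintro ⟨h1, h2⟩
        exact ⟨by rw [← hagree i (Set.mem_Ici.mp hi) ω h2]; exact h1, h2⟩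
      · rintro ⟨h1, h2⟩
        exact ⟨by rw [hagree i (Set.mem_Ici.mp hi) ω h2]; exact h1, h2⟩
    exact hle _ hT
  obtain ⟨T', hT'meas, hTT'⟩ := hTtrace
  have h1c : (0:ℝ) ≤ 1 - 2*c := by linarith
  -- bound on P(E s = 0)
  have hE0 : ∀ s, 1 ≤ s → P {ω | E s ω = 0} ≤ ENNReal.ofReal (1 - 2*c) := by
    intro s hs
    have hU0m : MeasurableSet[m0] {ω | E s ω = 0} := hEmeas s (measurableSet_singleton 0)
    have hU1m : MeasurableSet[m0] {ω | E s ω = 1} := hEmeas s (measurableSet_singleton 1)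
    have hUmm : MeasurableSet[m0] {ω | E s ω = -1} := hEmeas s (measurableSet_singleton (-1))
    have hunion : {ω | E s ω = -1} ∪ {ω | E s ω = 1} ∪ {ω | E s ω = 0} = Set.univ := by
      ext ω
      have := hEval s hs ω
      simp only [Set.mem_insert_iff, Set.mem_singleton_iff] at this
      simp only [Set.mem_union, Set.mem_setOf_eq, Set.mem_univ, iff_true]
      tauto
    have hd1 : Disjoint {ω | E s ω = -1} {ω | E s ω = 1} := by
      rw [Set.disjoint_left]; intro ω h1 h2
      simp only [Set.mem_setOf_eq] at h1 h2; rw [h1] at h2; norm_num at h2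
    have hd2 : Disjoint ({ω | E s ω = -1} ∪ {ω | E s ω = 1}) {ω | E s ω = 0} := by
      rw [Set.disjoint_left]; intro ω h1 h2
      simp only [Set.mem_union, Set.mem_setOf_eq] at h1 h2
      rcases h1 with h1 | h1 <;> rw [h2] at h1 <;> norm_num at h1
    have hsum : ENNReal.ofReal (δ s) + ENNReal.ofReal (θ s) + P {ω | E s ω = 0} = 1 := by
      rw [← hEneg s hs, ← hE1 s hs, ← measure_union hd1 hU1m,
        ← measure_union hd2 hU0m, hunion, measure_univ]
    have hθs := hθ s hs
    have hδs := hδ s hs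
    have h2c : ENNReal.ofReal (2*c) ≤ ENNReal.ofReal (δ s) + ENNReal.ofReal (θ s) := by
      rw [← ENNReal.ofReal_add (by linarith [hδs.1]) (by linarith [hθs.1])]
      exact ENNReal.ofReal_le_ofReal (by linarith [hθs.1, hδs.1])
    have hkey : P {ω | E s ω = 0} + ENNReal.ofReal (2*c)
        ≤ ENNReal.ofReal (1 - 2*c) + ENNReal.ofReal (2*c) := by
      rw [← ENNReal.ofReal_add h1c (by linarith), (by ring : 1 - 2*c + 2*c = (1:ℝ)),
        ENNReal.ofReal_one]
      calc P {ω | E s ω = 0} + ENNReal.ofReal (2*c)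
          ≤ P {ω | E s ω = 0} + (ENNReal.ofReal (δ s) + ENNReal.ofReal (θ s)) :=
            add_le_add_right h2c _
        _ = 1 := by rw [← hsum]; ring
    exact (ENNReal.add_le_add_iff_right ENNReal.ofReal_ne_top).mp hkey
  -- product formula for P(Rᶜ)
  have hRc_set : Rᶜ = ⋂ s ∈ Finset.Icc (t+1) (t+k), X s ⁻¹' ({0} : Set ℝ) := by
    rw [hRdef]
    ext ω
    simp only [Set.mem_compl_iff, Set.mem_setOf_eq, Set.mem_iInter,
      Set.mem_preimage, Set.mem_singleton_iff]
    push_neg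
    constructor
    · intro h s hs
      rw [hXE s (by rw [Finset.mem_Icc] at hs; omega)]
      exact h s hs
    · intro h s hs
      have h2 := h s hs
      rwa [hXE s (by rw [Finset.mem_Icc] at hs; omega)] at h2
  have hRcP : P Rᶜ = ∏ s ∈ Finset.Icc (t+1) (t+k), P (X s ⁻¹' ({0} : Set ℝ)) := by
    rw [hRc_set]
    exact hIndep.meas_biInter (fun i _ => ⟨{0}, measurableSet_singleton 0, rfl⟩)
  have hfactor : ∀ s ∈ Finset.Icc (t+1) (t+k),
      P (X s ⁻¹' ({0} : Set ℝ)) ≤ ENNReal.ofReal (1 - 2*c) := by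
    intro s hs
    rw [Finset.mem_Icc] at hs
    have h1s : 1 ≤ s := by omega
    have heq : X s ⁻¹' ({0} : Set ℝ) = {ω | E s ω = 0} := by
      rw [hXE s h1s]; rfl
    rw [heq]
    exact hE0 s h1s
  have hRcbound : (P Rᶜ).toReal ≤ (1 - 2*c)^k := by
    have hle : P Rᶜ ≤ (ENNReal.ofReal (1 - 2*c))^k := by
      rw [hRcP]
      calc ∏ s ∈ Finset.Icc (t+1) (t+k), P (X s ⁻¹' ({0} : Set ℝ))
          ≤ ∏ _s ∈ Finset.Icc (t+1) (t+k), ENNReal.ofReal (1 - 2*c) :=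
            Finset.prod_le_prod' hfactor
        _ = (ENNReal.ofReal (1 - 2*c))^k := by
            rw [Finset.prod_const, Nat.card_Icc]
            congr 1
            omega
    have h2 := ENNReal.toReal_mono (ENNReal.pow_ne_top ENNReal.ofReal_ne_top) hle
    rwa [ENNReal.toReal_pow, ENNReal.toReal_ofReal h1c] at h2
  -- final arithmetic
  have hRamb : MeasurableSet[m0] R := hMfut_le _ hR_fut
  have hSTsplit : P (S ∩ T) = P (S ∩ (T' ∩ R)) + P (S ∩ T ∩ Rᶜ) := by
    have h := measure_inter_add_diff (μ := P) (S ∩ T) hRamb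
    rw [Set.diff_eq] at h
    rw [← h]
    congr 1
    rw [Set.inter_assoc, hTT']
  have hTsplit : P T = P (T' ∩ R) + P (T ∩ Rᶜ) := by
    have h := measure_inter_add_diff (μ := P) T hRamb
    rw [Set.diff_eq, hTT'] at h
    exact h.symm
  have hprod : P (S ∩ (T' ∩ R)) = P S * P (T' ∩ R) :=
    (Indep_iff Mpast Mfut P).mp hIndepPF S (T' ∩ R) hS' (hT'meas.inter hR_fut)
  have hne : ∀ u : Set Ω, P u ≠ ⊤ := fun u => measure_ne_top P u
  have e1 : (P (S ∩ T)).toReal = (P S).toReal * (P (T' ∩ R)).toReal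
      + (P (S ∩ T ∩ Rᶜ)).toReal := by
    rw [hSTsplit, ENNReal.toReal_add (hne _) (hne _), hprod, ENNReal.toReal_mul]
  have e2 : (P T).toReal = (P (T' ∩ R)).toReal + (P (T ∩ Rᶜ)).toReal := by
    rw [hTsplit, ENNReal.toReal_add (hne _) (hne _)]
  rw [e1, e2]
  have e3 : (P S).toReal * (P (T' ∩ R)).toReal + (P (S ∩ T ∩ Rᶜ)).toReal
      - (P S).toReal * ((P (T' ∩ R)).toReal + (P (T ∩ Rᶜ)).toReal)
      = (P (S ∩ T ∩ Rᶜ)).toReal - (P S).toReal * (P (T ∩ Rᶜ)).toReal := by ring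
  rw [e3]
  have hx0 : (0:ℝ) ≤ (P (S ∩ T ∩ Rᶜ)).toReal := ENNReal.toReal_nonneg
  have hy0 : (0:ℝ) ≤ (P (T ∩ Rᶜ)).toReal := ENNReal.toReal_nonneg
  have hxb : (P (S ∩ T ∩ Rᶜ)).toReal ≤ (P Rᶜ).toReal :=
    ENNReal.toReal_mono (hne _) (measure_mono Set.inter_subset_right)
  have hyb : (P (T ∩ Rᶜ)).toReal ≤ (P Rᶜ).toReal :=
    ENNReal.toReal_mono (hne _) (measure_mono Set.inter_subset_right)
  have hs0 : (0:ℝ) ≤ (P S).toReal := ENNReal.toReal_nonneg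
  have hs1 : (P S).toReal ≤ 1 := by
    have h := ENNReal.toReal_mono (measure_ne_top P _) (measure_mono (Set.subset_univ S))
    simpa using h
  have hsy : (P S).toReal * (P (T ∩ Rᶜ)).toReal ≤ (P (T ∩ Rᶜ)).toReal :=
    mul_le_of_le_one_left hy0 hs1
  have hsy0 : (0:ℝ) ≤ (P S).toReal * (P (T ∩ Rᶜ)).toReal := mul_nonneg hs0 hy0
  have habs : |(P (S ∩ T ∩ Rᶜ)).toReal - (P S).toReal * (P (T ∩ Rᶜ)).toReal|
      ≤ (P Rᶜ).toReal := by
    rw [abs_le]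
    constructor <;> [linarith; linarith]
  linarith [hRcbound]
end

section
/- Let c ∈ (0, 1/2) and C_π ≥ 1. Let (θ_t)_{t≥0}, (δ_t)_{t≥0} be real sequences with θ_t, δ_t ∈ [c, 1 − c] for all t, and let (π_t)_{t≥0} ⊂ [0, 1] satisfy π_t = θ_t + (1 − θ_t − δ_t)·π_{t−1} for all t ≥ 1. Assume the base bound |π_1 − π_0| ≤ C_π·(|θ_1 − θ_0| + |δ_1 − δ_0|). Then for every u ≥ 1, |π_u − π_{u−1}| ≤ C_π · Σ_{v=1}^{u} (1 − 2c)^{u−v}·(|θ_v − θ_{v−1}| + |δ_v − δ_{v−1}|). -/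
/-- **Geometric-decay bound for the increments of the marginals.**
If `π_t = θ_t + (1 − θ_t − δ_t)·π_{t−1}` with `θ_t, δ_t ∈ [c, 1 − c]`, `π_t ∈ [0,1]`, and
`|π_1 − π_0| ≤ C_π(|θ_1 − θ_0| + |δ_1 − δ_0|)`, then for every `u ≥ 1`,
`|π_u − π_{u−1}| ≤ C_π Σ_{v=1}^u (1 − 2c)^{u−v}(|θ_v − θ_{v−1}| + |δ_v − δ_{v−1}|)`. -/
theorem stmt7 (c Cpi : ℝ) (hc0 : 0 < c) (hc : c < 1 / 2) (hCpi : 1 ≤ Cpi)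
    (θ δ : ℕ → ℝ)
    (hθ : ∀ t, θ t ∈ Set.Icc c (1 - c)) (hδ : ∀ t, δ t ∈ Set.Icc c (1 - c))
    (pr : ℕ → ℝ) (hpr : ∀ t, pr t ∈ Set.Icc (0 : ℝ) 1)
    (hrec : ∀ t : ℕ, 1 ≤ t → pr t = θ t + (1 - θ t - δ t) * pr (t - 1))
    (hbase : |pr 1 - pr 0| ≤ Cpi * (|θ 1 - θ 0| + |δ 1 - δ 0|)) :
    ∀ u : ℕ, 1 ≤ u →
      |pr u - pr (u - 1)| ≤
        Cpi * ∑ v ∈ Finset.Icc 1 u,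
          (1 - 2 * c) ^ (u - v) * (|θ v - θ (v - 1)| + |δ v - δ (v - 1)|) := by
  intro u hu
  induction u, hu using Nat.le_induction with
  | base =>
    simpa using hbase
  | succ n hn ih =>
    set a : ℕ → ℝ := fun v => |θ v - θ (v - 1)| + |δ v - δ (v - 1)| with ha
    have hq : (0:ℝ) ≤ 1 - 2 * c := by linarith
    have hanneg : ∀ v, 0 ≤ a v := fun v => add_nonneg (abs_nonneg _) (abs_nonneg _)
    have hsumnneg : 0 ≤ ∑ v ∈ Finset.Icc 1 n, (1 - 2 * c) ^ (n - v) * a v :=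
      Finset.sum_nonneg fun v _ => mul_nonneg (pow_nonneg hq _) (hanneg v)
    -- recursion identity
    have h1 := hrec (n + 1) (by omega)
    have h2 := hrec n hn
    simp only [Nat.add_sub_cancel] at h1
    have hid : pr (n + 1) - pr n =
        (θ (n + 1) - θ n) * (1 - pr n) - (δ (n + 1) - δ n) * pr n
          + (1 - θ n - δ n) * (pr n - pr (n - 1)) := by
      linear_combination h1 - h2
    have hθn := hθ n; have hδn := hδ n
    have hprn := hpr n
    simp only [Set.mem_Icc] at hθn hδn hprn
    have hcoef : |1 - θ n - δ n| ≤ 1 - 2 * c := by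
      rw [abs_le]; constructor <;> nlinarith [hθn.1, hθn.2, hδn.1, hδn.2]
    have hkey : |pr (n + 1) - pr n| ≤ a (n + 1) + (1 - 2 * c) * |pr n - pr (n - 1)| := by
      rw [hid]
      calc |(θ (n + 1) - θ n) * (1 - pr n) - (δ (n + 1) - δ n) * pr n
          + (1 - θ n - δ n) * (pr n - pr (n - 1))|
          ≤ |(θ (n + 1) - θ n) * (1 - pr n)| + |(δ (n + 1) - δ n) * pr n|
            + |(1 - θ n - δ n) * (pr n - pr (n - 1))| := by
            refine le_trans (abs_add_le _ _) ?_
            gcongr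
            exact abs_sub _ _
        _ ≤ |θ (n + 1) - θ n| * 1 + |δ (n + 1) - δ n| * 1
            + (1 - 2 * c) * |pr n - pr (n - 1)| := by
            rw [abs_mul, abs_mul, abs_mul]
            gcongr
            · rw [abs_le]; constructor <;> linarith [hprn.1, hprn.2]
            · rw [abs_le]; constructor <;> linarith [hprn.1, hprn.2]
        _ ≤ a (n + 1) + (1 - 2 * c) * |pr n - pr (n - 1)| := by
            simp [ha]
    -- sum recursion
    have hsum : ∑ v ∈ Finset.Icc 1 (n + 1), (1 - 2 * c) ^ (n + 1 - v) * a v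
        = a (n + 1) + (1 - 2 * c) * ∑ v ∈ Finset.Icc 1 n, (1 - 2 * c) ^ (n - v) * a v := by
      rw [Finset.sum_Icc_succ_top (by omega), Finset.mul_sum]
      simp only [Nat.sub_self, pow_zero, one_mul]
      rw [add_comm]
      congr 1
      refine Finset.sum_congr rfl fun v hv => ?_
      simp only [Finset.mem_Icc] at hv
      have : n + 1 - v = (n - v) + 1 := by omega
      rw [this, pow_succ]; ring
    rw [hsum, mul_add]
    have hup : |pr (n + 1 - 1) - pr (n - 1)| = |pr n - pr (n - 1)| := by norm_num
    calc |pr (n + 1) - pr (n + 1 - 1)| = |pr (n + 1) - pr n| := by norm_num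
      _ ≤ a (n + 1) + (1 - 2 * c) * |pr n - pr (n - 1)| := hkey
      _ ≤ Cpi * a (n + 1) + (1 - 2 * c) *
          (Cpi * ∑ v ∈ Finset.Icc 1 n, (1 - 2 * c) ^ (n - v) * a v) := by
          have hih : |pr n - pr (n - 1)| ≤
              Cpi * ∑ v ∈ Finset.Icc 1 n, (1 - 2 * c) ^ (n - v) * a v := by simpa using ih
          have h3 := mul_le_mul_of_nonneg_left hih hq
          have h4 := le_mul_of_one_le_left (hanneg (n + 1)) hCpi
          linarith
      _ = Cpi * a (n + 1) + Cpi * ((1 - 2 * c) *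
          ∑ v ∈ Finset.Icc 1 n, (1 - 2 * c) ^ (n - v) * a v) := by ring
end

section
/- For every c ∈ (0, 1/2) and all θ, δ, θ′, δ′ ∈ [c, 1 − c], kl(θ/(θ + δ), θ′/(θ′ + δ′)) ≤ (8 / c⁶)·((θ − θ′)² + (δ − δ′)²). -/
set_option maxHeartbeats 1000000


/-- The binary Kullback–Leibler divergence `kl(p, q)` between `Bernoulli(p)` and
`Bernoulli(q)` (with the convention `0·log 0 = 0`, automatic since `Real.log 0 = 0`). -/
noncomputable def klBin (p q : ℝ) : ℝ :=
  p * Real.log (p / q) + (1 - p) * Real.log ((1 - p) / (1 - q))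

lemma klBin_le_chiSq (p q : ℝ) (hp0 : 0 ≤ p) (hp1 : p ≤ 1) (hq0 : 0 < q) (hq1 : q < 1) :
    klBin p q ≤ (p - q) ^ 2 / (q * (1 - q)) := by
  have hq1' : (0:ℝ) < 1 - q := by linarith
  have h1 : p * Real.log (p / q) ≤ p * (p / q - 1) := by
    rcases eq_or_lt_of_le hp0 with h | h
    · simp [← h]
    · exact mul_le_mul_of_nonneg_left
        (Real.log_le_sub_one_of_pos (div_pos h hq0)) (le_of_lt h)
  have h2 : (1 - p) * Real.log ((1 - p) / (1 - q)) ≤ (1 - p) * ((1 - p) / (1 - q) - 1) := by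
    rcases eq_or_lt_of_le hp1 with h | h
    · simp [h]
    · exact mul_le_mul_of_nonneg_left
        (Real.log_le_sub_one_of_pos (div_pos (by linarith) hq1')) (by linarith)
  have key : p * (p / q - 1) + (1 - p) * ((1 - p) / (1 - q) - 1)
      = (p - q) ^ 2 / (q * (1 - q)) := by
    rw [eq_div_iff (by positivity : q * (1 - q) ≠ 0)]
    field_simp
    ring
  calc klBin p q ≤ p * (p / q - 1) + (1 - p) * ((1 - p) / (1 - q) - 1) := add_le_add h1 h2
    _ = (p - q) ^ 2 / (q * (1 - q)) := key

/-- **KL bound between stationary marginals.** For `θ, δ, θ′, δ′ ∈ [c, 1 − c]`,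
`kl(θ/(θ+δ), θ′/(θ′+δ′)) ≤ (8/c⁶)·((θ−θ′)² + (δ−δ′)²)`. -/
theorem stmt9 (c : ℝ) (hc0 : 0 < c) (hc : c < 1 / 2)
    (θ δ θ' δ' : ℝ)
    (hθ : θ ∈ Set.Icc c (1 - c)) (hδ : δ ∈ Set.Icc c (1 - c))
    (hθ' : θ' ∈ Set.Icc c (1 - c)) (hδ' : δ' ∈ Set.Icc c (1 - c)) :
    klBin (θ / (θ + δ)) (θ' / (θ' + δ')) ≤
      8 / c ^ 6 * ((θ - θ') ^ 2 + (δ - δ') ^ 2) := by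
  obtain ⟨hθ1, hθ2⟩ := hθ
  obtain ⟨hδ1, hδ2⟩ := hδ
  obtain ⟨hθ'1, hθ'2⟩ := hθ'
  obtain ⟨hδ'1, hδ'2⟩ := hδ'
  have hs : (0:ℝ) < θ + δ := by linarith
  have hs' : (0:ℝ) < θ' + δ' := by linarith
  have hS0 : (0:ℝ) ≤ (θ - θ') ^ 2 + (δ - δ') ^ 2 := by positivity
  have hp0 : 0 ≤ θ / (θ + δ) := div_nonneg (by linarith) hs.le
  have hp1 : θ / (θ + δ) ≤ 1 := by rw [div_le_one hs]; linarith
  have hq0 : 0 < θ' / (θ' + δ') := div_pos (by linarith) hs'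
  have hq1 : θ' / (θ' + δ') < 1 := by rw [div_lt_one hs']; linarith
  have hkl := klBin_le_chiSq _ _ hp0 hp1 hq0 hq1
  -- numerator bound
  have hpq : θ / (θ + δ) - θ' / (θ' + δ')
      = (θ * δ' - θ' * δ) / ((θ + δ) * (θ' + δ')) := by
    field_simp
    ring
  have hθsq : θ ^ 2 ≤ 1 := by nlinarith
  have hδsq : δ ^ 2 ≤ 1 := by nlinarith
  have hnum : (θ * δ' - θ' * δ) ^ 2 ≤ 2 * ((θ - θ') ^ 2 + (δ - δ') ^ 2) := by
    have h1 : θ * δ' - θ' * δ = θ * (δ' - δ) + δ * (θ - θ') := by ring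
    rw [h1]
    nlinarith [sq_nonneg (θ * (δ' - δ) - δ * (θ - θ')),
      mul_nonneg (sub_nonneg.mpr hθsq) (sq_nonneg (δ' - δ)),
      mul_nonneg (sub_nonneg.mpr hδsq) (sq_nonneg (θ - θ'))]
  have h4c : 4 * c ^ 2 ≤ (θ + δ) * (θ' + δ') := by nlinarith
  have hden : 16 * c ^ 4 ≤ ((θ + δ) * (θ' + δ')) ^ 2 := by
    have := pow_le_pow_left₀ (by positivity : (0:ℝ) ≤ 4 * c ^ 2) h4c 2
    nlinarith [this]
  have hsq : (θ / (θ + δ) - θ' / (θ' + δ')) ^ 2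
      ≤ 2 * ((θ - θ') ^ 2 + (δ - δ') ^ 2) / (16 * c ^ 4) := by
    rw [hpq, div_pow]
    exact div_le_div₀ (by linarith) hnum (by positivity) hden
  -- denominator bound
  have hqlb1 : c / 2 ≤ θ' / (θ' + δ') := by
    rw [le_div_iff₀ hs']; nlinarith
  have hqlb2 : c / 2 ≤ 1 - θ' / (θ' + δ') := by
    have h : θ' / (θ' + δ') ≤ 1 - c / 2 := by
      rw [div_le_iff₀ hs']; nlinarith
    linarith
  have hqlb : c ^ 2 / 4 ≤ θ' / (θ' + δ') * (1 - θ' / (θ' + δ')) := by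
    have := mul_le_mul hqlb1 hqlb2 (by positivity) (le_of_lt hq0)
    nlinarith [this]
  have hchi : (θ / (θ + δ) - θ' / (θ' + δ')) ^ 2 / (θ' / (θ' + δ') * (1 - θ' / (θ' + δ')))
      ≤ (2 * ((θ - θ') ^ 2 + (δ - δ') ^ 2) / (16 * c ^ 4)) / (c ^ 2 / 4) :=
    div_le_div₀ (by positivity) hsq (by positivity) hqlb
  have hfinal : (2 * ((θ - θ') ^ 2 + (δ - δ') ^ 2) / (16 * c ^ 4)) / (c ^ 2 / 4)
      ≤ 8 / c ^ 6 * ((θ - θ') ^ 2 + (δ - δ') ^ 2) := by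
    have hinv : (0:ℝ) ≤ ((θ - θ') ^ 2 + (δ - δ') ^ 2) * (c ^ 6)⁻¹ :=
      mul_nonneg hS0 (by positivity)
    calc (2 * ((θ - θ') ^ 2 + (δ - δ') ^ 2) / (16 * c ^ 4)) / (c ^ 2 / 4)
        = ((θ - θ') ^ 2 + (δ - δ') ^ 2) * (c ^ 6)⁻¹ / 2 := by
          field_simp
          ring
      _ ≤ 8 * (((θ - θ') ^ 2 + (δ - δ') ^ 2) * (c ^ 6)⁻¹) := by linarith
      _ = 8 / c ^ 6 * ((θ - θ') ^ 2 + (δ - δ') ^ 2) := by ring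
  linarith
end

section
/- Let k ≥ 1 be an integer, let θ₁, …, θ_k be real numbers, and let w₁, …, w_k be real numbers with w_i ≥ c for all i, where c > 0. Then | (Σ_{i=1}^k θ_i w_i) / (Σ_{i=1}^k w_i) − (1/k)·Σ_{i=1}^k θ_i | ≤ (1/(2c)) · max_{i,j} |θ_i − θ_j| · max_{i,j} |w_i − w_j|. -/
open Finset

/-- **Weighted vs. unweighted average bound.** If `w_i ≥ c > 0` then
`|(Σθ_i w_i)/(Σw_i) − (1/k)Σθ_i| ≤ (1/(2c))·max_{i,j}|θ_i−θ_j|·max_{i,j}|w_i−w_j|`. -/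
theorem stmt16 (k : ℕ) [NeZero k] (c : ℝ) (hc : 0 < c)
    (θ w : Fin k → ℝ) (hw : ∀ i, c ≤ w i) :
    |(∑ i, θ i * w i) / (∑ i, w i) - (1 / (k : ℝ)) * ∑ i, θ i| ≤
      1 / (2 * c) * (⨆ p : Fin k × Fin k, |θ p.1 - θ p.2|) *
        (⨆ p : Fin k × Fin k, |w p.1 - w p.2|) := by
  have hk0 : 0 < (k : ℝ) := by
    exact_mod_cast Nat.pos_of_ne_zero (NeZero.ne k)
  have hk0' : (k : ℝ) ≠ 0 := ne_of_gt hk0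
  set S := ∑ i, w i with hSdef
  have hS : (k : ℝ) * c ≤ S := by
    calc (k : ℝ) * c = ∑ _i : Fin k, c := by
          simp [mul_comm]
      _ ≤ S := Finset.sum_le_sum fun i _ => hw i
  have hS0 : 0 < S := lt_of_lt_of_le (by positivity) hS
  have hS0' : S ≠ 0 := ne_of_gt hS0
  set Mθ := ⨆ p : Fin k × Fin k, |θ p.1 - θ p.2| with hMθ
  set Mw := ⨆ p : Fin k × Fin k, |w p.1 - w p.2| with hMw
  have hbθ : BddAbove (Set.range fun p : Fin k × Fin k => |θ p.1 - θ p.2|) :=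
    Set.Finite.bddAbove (Set.finite_range _)
  have hbw : BddAbove (Set.range fun p : Fin k × Fin k => |w p.1 - w p.2|) :=
    Set.Finite.bddAbove (Set.finite_range _)
  have hθle : ∀ i j : Fin k, |θ i - θ j| ≤ Mθ := fun i j =>
    le_ciSup hbθ (i, j)
  have hwle : ∀ i j : Fin k, |w i - w j| ≤ Mw := fun i j =>
    le_ciSup hbw (i, j)
  have i0 : Fin k := ⟨0, Nat.pos_of_ne_zero (NeZero.ne k)⟩
  have hMθ0 : 0 ≤ Mθ := le_trans (by simp) (hθle i0 i0)
  have hMw0 : 0 ≤ Mw := le_trans (by simp) (hwle i0 i0)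
  -- symmetrization identity
  have hD : (∑ i, ∑ j, (θ i - θ j) * (w i - w j)) =
      2 * k * (∑ i, θ i * w i) - 2 * (∑ i, θ i) * S := by
    have : ∀ i : Fin k, ∑ j, (θ i - θ j) * (w i - w j) =
        (k : ℝ) * (θ i * w i) - θ i * S - (∑ j, θ j) * w i + (∑ j, θ j * w j) := by
      intro i
      rw [Finset.sum_congr rfl (fun j _ => by ring :
        ∀ j ∈ Finset.univ, (θ i - θ j) * (w i - w j)
          = θ i * w i - θ i * w j - θ j * w i + θ j * w j)]
      simp [Finset.sum_add_distrib, Finset.sum_sub_distrib, ← Finset.mul_sum, ← Finset.sum_mul,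
        hSdef, Finset.card_univ, mul_comm]
    rw [Finset.sum_congr rfl fun i _ => this i]
    simp [Finset.sum_add_distrib, Finset.sum_sub_distrib, ← Finset.sum_mul, ← Finset.mul_sum,
      Finset.card_univ, hSdef]
    ring
  have hid : (∑ i, θ i * w i) / S - (1 / (k : ℝ)) * ∑ i, θ i =
      (∑ i, ∑ j, (θ i - θ j) * (w i - w j)) / (2 * k * S) := by
    rw [hD]
    field_simp
  rw [hid, abs_div]
  have habsD : |∑ i, ∑ j, (θ i - θ j) * (w i - w j)| ≤ (k : ℝ) ^ 2 * (Mθ * Mw) := by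
    calc |∑ i, ∑ j, (θ i - θ j) * (w i - w j)|
        ≤ ∑ i, ∑ j, |(θ i - θ j) * (w i - w j)| := by
          refine (Finset.abs_sum_le_sum_abs _ _).trans ?_
          exact Finset.sum_le_sum fun i _ => Finset.abs_sum_le_sum_abs _ _
      _ ≤ ∑ _i : Fin k, ∑ _j : Fin k, Mθ * Mw := by
          refine Finset.sum_le_sum fun i _ => Finset.sum_le_sum fun j _ => ?_
          rw [abs_mul]
          exact mul_le_mul (hθle i j) (hwle i j) (abs_nonneg _) hMθ0
      _ = (k : ℝ) ^ 2 * (Mθ * Mw) := by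
          simp [Finset.card_univ]
          ring
  have hden : |2 * (k : ℝ) * S| = 2 * k * S := abs_of_pos (by positivity)
  rw [hden]
  rw [div_le_iff₀ (by positivity)]
  calc |∑ i, ∑ j, (θ i - θ j) * (w i - w j)| ≤ (k : ℝ) ^ 2 * (Mθ * Mw) := habsD
    _ = 1 / (2 * c) * Mθ * Mw * (2 * k * ((k:ℝ) * c)) := by field_simp
    _ ≤ 1 / (2 * c) * Mθ * Mw * (2 * k * S) := by
        have h1 : 0 ≤ 1 / (2 * c) * Mθ * Mw := by positivity
        have h2 : 2 * (k:ℝ) * ((k:ℝ) * c) ≤ 2 * k * S := by nlinarith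
        exact mul_le_mul_of_nonneg_left h2 h1
end

section
/- Let p ≥ 2 and let u₁, …, u_p be real numbers. For a real x write x₊ = max(x, 0) and x₋ = max(−x, 0). Suppose there exists C_α ∈ [0, 1) such that Σ_{t=1}^{p−1} (u_{t+1} − u_t)₋ ≤ C_α · Σ_{t=1}^{p−1} (u_{t+1} − u_t)₊. Then Σ_{t=1}^{p−1} |u_{t+1} − u_t| ≤ ((1 + C_α)/(1 − C_α)) · (u_p − u₁); in particular u_p ≥ u₁. -/
open Finset

/-- **Total-variation bound for dominantly monotone sequences.** If the total negative
variation of `u₁, …, u_p` is at most `C_α` times the total positive variation,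
`C_α ∈ [0, 1)`, then `Σ_{t=1}^{p−1}|u_{t+1} − u_t| ≤ ((1+C_α)/(1−C_α))(u_p − u₁)`; in
particular `u_p ≥ u₁`. -/
theorem stmt17 (p : ℕ) (hp : 2 ≤ p) (u : ℕ → ℝ)
    (Cα : ℝ) (hC0 : 0 ≤ Cα) (hC1 : Cα < 1)
    (hdom : ∑ t ∈ Finset.Icc 1 (p - 1), max (-(u (t + 1) - u t)) 0 ≤
      Cα * ∑ t ∈ Finset.Icc 1 (p - 1), max (u (t + 1) - u t) 0) :
    ∑ t ∈ Finset.Icc 1 (p - 1), |u (t + 1) - u t| ≤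
      (1 + Cα) / (1 - Cα) * (u p - u 1) ∧ u 1 ≤ u p := by
  set P := ∑ t ∈ Finset.Icc 1 (p - 1), max (u (t + 1) - u t) 0 with hP
  set N := ∑ t ∈ Finset.Icc 1 (p - 1), max (-(u (t + 1) - u t)) 0 with hN
  have hPnn : 0 ≤ P := Finset.sum_nonneg fun t _ => le_max_right _ _
  have habs : ∑ t ∈ Finset.Icc 1 (p - 1), |u (t + 1) - u t| = P + N := by
    rw [hP, hN, ← Finset.sum_add_distrib]
    refine Finset.sum_congr rfl fun t _ => ?_
    rcases le_total (u (t + 1) - u t) 0 with h | h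
    · rw [abs_of_nonpos h, max_eq_right h, max_eq_left (by linarith), zero_add]
    · rw [abs_of_nonneg h, max_eq_left h, max_eq_right (by linarith), add_zero]
  have htel : u p - u 1 = P - N := by
    have h1 : ∑ t ∈ Finset.Icc 1 (p - 1), (u (t + 1) - u t) = u p - u 1 := by
      have hIcc : Finset.Icc 1 (p - 1) = Finset.Ico 1 p := by
        rw [← Finset.Ico_add_one_right_eq_Icc]; congr 1; omega
      have htel := Finset.sum_range_sub (fun i => u (i + 1)) (p - 1)
      rw [hIcc, Finset.sum_Ico_eq_sum_range]
      rw [show p - 1 + 1 = p by omega] at htel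
      rw [← htel]
      refine Finset.sum_congr rfl fun i _ => ?_
      congr 2 <;> omega
    rw [← h1, hP, hN, ← Finset.sum_sub_distrib]
    refine Finset.sum_congr rfl fun t _ => ?_
    rcases le_total (u (t + 1) - u t) 0 with h | h
    · rw [max_eq_right h, max_eq_left (by linarith)]; ring
    · rw [max_eq_left h, max_eq_right (by linarith)]; ring
  have hCpos : 0 < 1 - Cα := by linarith
  have hge : u 1 ≤ u p := by nlinarith
  refine ⟨?_, hge⟩
  rw [habs, htel, div_mul_eq_mul_div, le_div_iff₀ hCpos]
  nlinarith
end
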